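/- Let f : R^N → (0, +∞) be locally integrable and g : R^N × S^{N−1} → (0, +∞) be a Borel density, and suppose there is a constant M > 0 with g(x, ν) ≤ M f(x) for all x, ν. Let E be a set of finite g-perimeter with |E|_f < +∞. Then for every ε > 0 there exists R > 0 such that H = E ∩ B_R satisfies |E △ H|_f < ε and H^{N−1}_g(∂*E △ ∂*H) < ε. -/

import Mathlib

open MeasureTheory Metric Filter Set
open scoped ENNReal Topology NNReal

noncomputable section

abbrev EucN (N : ℕ) := EuclideanSpace ℝ (Fin N)

variable {N : ℕ}

def upperHalfBall (x ν : EucN N) (r : ℝ) : Set (EucN N) :=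
  {z : EucN N | dist z x < r ∧ 0 < (inner ℝ (z - x) ν : ℝ)}

def lowerHalfBall (x ν : EucN N) (r : ℝ) : Set (EucN N) :=
  {z : EucN N | dist z x < r ∧ (inner ℝ (z - x) ν : ℝ) < 0}

def IsOuterNormal (E : Set (EucN N)) (x ν : EucN N) : Prop :=
  ‖ν‖ = 1 ∧
    Tendsto (fun r => volume (E ∩ upperHalfBall x ν r) / volume (upperHalfBall x ν r))
      (𝓝[>] (0:ℝ)) (𝓝 0) ∧
    Tendsto (fun r => volume (E ∩ lowerHalfBall x ν r) / volume (lowerHalfBall x ν r))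
      (𝓝[>] (0:ℝ)) (𝓝 1)

def redBoundary (E : Set (EucN N)) : Set (EucN N) := {x : EucN N | ∃ ν, IsOuterNormal E x ν}

open Classical in
def outerNormal (E : Set (EucN N)) (x : EucN N) : EucN N :=
  if h : ∃ ν, IsOuterNormal E x ν then h.choose else 0

def HN1 (N : ℕ) : Measure (EucN N) := μH[(N : ℝ) - 1]

namespace TruncAux

lemma upperHalfBall_subset {x ν : EucN N} {r : ℝ} : upperHalfBall x ν r ⊆ ball x r :=
  fun _ hz => hz.1

lemma lowerHalfBall_subset {x ν : EucN N} {r : ℝ} : lowerHalfBall x ν r ⊆ ball x r :=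
  fun _ hz => hz.1

lemma inter_cb_eq {E s : Set (EucN N)} {x : EucN N} {r R : ℝ} (hs : s ⊆ ball x r)
    (h : r + ‖x‖ ≤ R) : (E ∩ closedBall 0 R) ∩ s = E ∩ s := by
  ext z
  constructor
  · rintro ⟨⟨hzE, -⟩, hzs⟩; exact ⟨hzE, hzs⟩
  · rintro ⟨hzE, hzs⟩
    have hz : dist z x < r := hs hzs
    have h1 : ‖z‖ ≤ ‖z - x‖ + ‖x‖ := by simpa using norm_add_le (z - x) x
    have h2 : dist z x = ‖z - x‖ := dist_eq_norm _ _
    refine ⟨⟨hzE, ?_⟩, hzs⟩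
    rw [mem_closedBall, dist_zero_right]
    linarith

lemma isOuterNormal_inter_iff {E : Set (EucN N)} {x ν : EucN N} {R : ℝ} (hx : ‖x‖ < R) :
    IsOuterNormal (E ∩ closedBall 0 R) x ν ↔ IsOuterNormal E x ν := by
  have hmem : Ioo (0:ℝ) (R - ‖x‖) ∈ 𝓝[>] (0:ℝ) :=
    Ioo_mem_nhdsGT_of_mem ⟨le_rfl, by linarith⟩
  have hupp : (fun r => volume ((E ∩ closedBall 0 R) ∩ upperHalfBall x ν r)
        / volume (upperHalfBall x ν r))
      =ᶠ[𝓝[>] (0:ℝ)] (fun r => volume (E ∩ upperHalfBall x ν r) / volume (upperHalfBall x ν r)) := by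
    filter_upwards [hmem] with r hr
    rw [inter_cb_eq upperHalfBall_subset (by linarith [hr.2])]
  have hlow : (fun r => volume ((E ∩ closedBall 0 R) ∩ lowerHalfBall x ν r)
        / volume (lowerHalfBall x ν r))
      =ᶠ[𝓝[>] (0:ℝ)] (fun r => volume (E ∩ lowerHalfBall x ν r) / volume (lowerHalfBall x ν r)) := by
    filter_upwards [hmem] with r hr
    rw [inter_cb_eq lowerHalfBall_subset (by linarith [hr.2])]
  constructor
  · rintro ⟨h1, h2, h3⟩
    exact ⟨h1, h2.congr' hupp, h3.congr' hlow⟩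
  · rintro ⟨h1, h2, h3⟩
    exact ⟨h1, h2.congr' hupp.symm, h3.congr' hlow.symm⟩

lemma not_mem_redBoundary_inter {E : Set (EucN N)} {x : EucN N} {R : ℝ} (hx : R < ‖x‖) :
    x ∉ redBoundary (E ∩ closedBall 0 R) := by
  rintro ⟨ν, -, -, h3⟩
  have hmem : Ioo (0:ℝ) (‖x‖ - R) ∈ 𝓝[>] (0:ℝ) :=
    Ioo_mem_nhdsGT_of_mem ⟨le_rfl, by linarith⟩
  have h0 : (fun _ : ℝ => (0:ℝ≥0∞))
      =ᶠ[𝓝[>] (0:ℝ)] (fun r => volume ((E ∩ closedBall 0 R) ∩ lowerHalfBall x ν r)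
        / volume (lowerHalfBall x ν r)) := by
    filter_upwards [hmem] with r hr
    have hempty : (E ∩ closedBall 0 R) ∩ lowerHalfBall x ν r = ∅ := by
      ext z
      simp only [mem_inter_iff, mem_empty_iff_false, iff_false, not_and]
      rintro ⟨-, hzR⟩ hzl
      have h1 : dist z x < r := hzl.1
      have h2 : ‖z‖ ≤ R := by rwa [mem_closedBall, dist_zero_right] at hzR
      have h3' : ‖x‖ ≤ ‖x - z‖ + ‖z‖ := by simpa using norm_add_le (x - z) z
      have h4 : ‖x - z‖ = dist z x := by rw [dist_eq_norm, norm_sub_rev]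
      linarith [hr.2]
    simp [hempty]
  have htend : Tendsto (fun r => volume ((E ∩ closedBall 0 R) ∩ lowerHalfBall x ν r)
      / volume (lowerHalfBall x ν r)) (𝓝[>] (0:ℝ)) (𝓝 0) :=
    tendsto_const_nhds.congr' h0
  exact zero_ne_one (tendsto_nhds_unique htend h3)


lemma isOuterNormal_outerNormal {E : Set (EucN N)} {x : EucN N} (h : x ∈ redBoundary E) :
    IsOuterNormal E x (outerNormal E x) := by
  have hex : ∃ ν, IsOuterNormal E x ν := h
  rw [outerNormal, dif_pos hex]
  exact hex.choose_spec

lemma volume_closedBall_le_two_mul [Nontrivial (EucN N)] {x ν : EucN N} (hν : ‖ν‖ = 1)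
    {r : ℝ} (hr : 0 < r) :
    volume (closedBall x r) ≤ 2 * volume (lowerHalfBall x ν r) := by
  set L0 : Set (EucN N) := {w : EucN N | ‖w‖ < r ∧ (inner ℝ w ν : ℝ) < 0} with hL0
  have hlow0 : volume (lowerHalfBall x ν r) = volume L0 := by
    have h1 : lowerHalfBall x ν r = (fun z => -x + z) ⁻¹' L0 := by
      ext z
      simp only [lowerHalfBall, mem_setOf_eq, mem_preimage, hL0, dist_eq_norm, neg_add_eq_sub]
    rw [h1, measure_preimage_add]
  have hupp0 : volume (upperHalfBall x ν r) = volume L0 := by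
    have h1 : upperHalfBall x ν r
        = (fun z => -x + z) ⁻¹' {w : EucN N | ‖w‖ < r ∧ 0 < (inner ℝ w ν : ℝ)} := by
      ext z
      simp only [upperHalfBall, mem_setOf_eq, mem_preimage, dist_eq_norm, neg_add_eq_sub]
    have h2 : {w : EucN N | ‖w‖ < r ∧ 0 < (inner ℝ w ν : ℝ)} = -L0 := by
      ext w
      simp only [hL0, Set.mem_neg, mem_setOf_eq, norm_neg, inner_neg_left, neg_neg_iff_pos,
        Left.neg_neg_iff]
    rw [h1, measure_preimage_add, h2, Measure.measure_neg]
  have hker : volume {z : EucN N | (inner ℝ (z - x) ν : ℝ) = 0} = 0 := by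
    have h1 : {z : EucN N | (inner ℝ (z - x) ν : ℝ) = 0}
        = (fun z => -x + z) ⁻¹' {w : EucN N | (inner ℝ w ν : ℝ) = 0} := by
      ext z; simp only [mem_setOf_eq, mem_preimage, neg_add_eq_sub]
    have h2 : {w : EucN N | (inner ℝ w ν : ℝ) = 0}
        = (LinearMap.ker (innerSL ℝ ν : EucN N →ₗ[ℝ] ℝ) : Submodule ℝ (EucN N)) := by
      ext w
      simp only [mem_setOf_eq, SetLike.mem_coe, LinearMap.mem_ker, ContinuousLinearMap.coe_coe,
        innerSL_apply_apply]
      rw [real_inner_comm]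
    rw [h1, measure_preimage_add, h2]
    refine Measure.addHaar_submodule _ _ ?_
    intro htop
    have hmem : ν ∈ LinearMap.ker (innerSL ℝ ν : EucN N →ₗ[ℝ] ℝ) := by rw [htop]; trivial
    have : (inner ℝ ν ν : ℝ) = 0 := by
      simpa [LinearMap.mem_ker, innerSL_apply_apply] using hmem
    rw [real_inner_self_eq_norm_sq, hν] at this
    norm_num at this
  have hcover : ball x r ⊆ lowerHalfBall x ν r ∪ upperHalfBall x ν r
      ∪ {z : EucN N | (inner ℝ (z - x) ν : ℝ) = 0} := by
    intro z hz
    rcases lt_trichotomy ((inner ℝ (z - x) ν : ℝ)) 0 with h | h | h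
    · exact Or.inl (Or.inl ⟨mem_ball.1 hz, h⟩)
    · exact Or.inr h
    · exact Or.inl (Or.inr ⟨mem_ball.1 hz, h⟩)
  calc volume (closedBall x r) = volume (ball x r) :=
        Measure.addHaar_closedBall_eq_addHaar_ball _ _ _
    _ ≤ volume (lowerHalfBall x ν r ∪ upperHalfBall x ν r)
        + volume {z : EucN N | (inner ℝ (z - x) ν : ℝ) = 0} :=
        le_trans (measure_mono hcover) (measure_union_le _ _)
    _ ≤ volume (lowerHalfBall x ν r) + volume (upperHalfBall x ν r) + 0 := by
        rw [hker]; exact add_le_add_left (measure_union_le _ _) 0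
    _ = 2 * volume (lowerHalfBall x ν r) := by rw [add_zero, hupp0, hlow0, two_mul]

/-- set of points of lower density at least 1/2 for `E`. -/
def densD (E : Set (EucN N)) : Set (EucN N) :=
  {x : EucN N | (1:ℝ≥0∞)/2 ≤ liminf (fun k : ℕ =>
    volume (E ∩ closedBall x (1/(k+1))) / volume (closedBall x (1/(k+1)))) atTop}

lemma measurable_vol_inter_cb {E : Set (EucN N)} (hE : MeasurableSet E) (r : ℝ) :
    Measurable (fun x : EucN N => volume (E ∩ closedBall x r)) := by
  have hS : MeasurableSet {p : EucN N × EucN N | p.2 ∈ E ∧ dist p.2 p.1 ≤ r} := by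
    refine (hE.preimage measurable_snd).inter ?_
    exact (isClosed_le (continuous_dist.comp (continuous_snd.prodMk continuous_fst))
      continuous_const).measurableSet
  have h2 := measurable_measure_prodMk_left (ν := (volume : Measure (EucN N))) hS
  have heq : (fun x : EucN N => volume (E ∩ closedBall x r))
      = fun x => volume (Prod.mk x ⁻¹' {p : EucN N × EucN N | p.2 ∈ E ∧ dist p.2 p.1 ≤ r}) := by
    funext x
    congr 1
  rw [heq]
  exact h2

lemma measurableSet_densD {E : Set (EucN N)} (hE : MeasurableSet E) :
    MeasurableSet (densD E) := by
  refine measurableSet_le measurable_const (Measurable.liminf fun k => ?_)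
  have h1 : (fun x : EucN N => volume (closedBall x (1/(k+1))))
      = fun _ => volume (closedBall (0 : EucN N) (1/(k+1))) :=
    funext fun x => Measure.addHaar_closedBall_center _ _ _
  exact (measurable_vol_inter_cb hE _).div (by rw [h1]; exact measurable_const)

lemma seq_tendsto_nhdsWithin :
    Tendsto (fun k : ℕ => (1:ℝ)/(k+1)) atTop (𝓝[>] (0:ℝ)) := by
  rw [tendsto_nhdsWithin_iff]
  exact ⟨tendsto_one_div_add_atTop_nhds_zero_nat,
    Eventually.of_forall fun k => mem_Ioi.2 (by positivity)⟩

lemma volume_densD_diff {E : Set (EucN N)} (hE : MeasurableSet E) :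
    volume (densD E \ E) = 0 := by
  have hbes := Besicovitch.ae_tendsto_measure_inter_div_of_measurableSet
    (volume : Measure (EucN N)) hE
  rw [ae_iff] at hbes
  refine measure_mono_null (fun x hx => ?_) hbes
  simp only [mem_setOf_eq]
  intro hP
  have h0 : E.indicator (1 : EucN N → ℝ≥0∞) x = 0 := indicator_of_notMem hx.2 _
  rw [h0] at hP
  have htend : Tendsto (fun k : ℕ => volume (E ∩ closedBall x (1/(k+1)))
      / volume (closedBall x (1/(k+1)))) atTop (𝓝 0) := hP.comp seq_tendsto_nhdsWithin
  have hlim := htend.liminf_eq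
  have h12 := hx.1
  simp only [densD, mem_setOf_eq] at h12
  rw [hlim] at h12
  have : (0:ℝ≥0∞) < 1/2 := ENNReal.div_pos one_ne_zero ENNReal.ofNat_ne_top
  exact (lt_irrefl _ (lt_of_lt_of_le this h12)).elim

lemma mem_densD_of_isOuterNormal [Nontrivial (EucN N)] {E' E : Set (EucN N)} (hsub : E' ⊆ E)
    {x ν : EucN N} (h : IsOuterNormal E' x ν) : x ∈ densD E := by
  obtain ⟨hν, -, h3⟩ := h
  have h3' : Tendsto (fun k : ℕ => volume (E' ∩ lowerHalfBall x ν (1/(k+1)))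
      / volume (lowerHalfBall x ν (1/(k+1)))) atTop (𝓝 1) := h3.comp seq_tendsto_nhdsWithin
  have key : ∀ k : ℕ, 2⁻¹ * (volume (E' ∩ lowerHalfBall x ν (1/(k+1)))
        / volume (lowerHalfBall x ν (1/(k+1))))
      ≤ volume (E ∩ closedBall x (1/(k+1))) / volume (closedBall x (1/(k+1))) := by
    intro k
    set r : ℝ := 1/(k+1) with hrdef
    have hr : 0 < r := by positivity
    have hnum : volume (E' ∩ lowerHalfBall x ν r) ≤ volume (E ∩ closedBall x r) :=
      measure_mono (fun z hz => ⟨hsub hz.1, mem_closedBall.2 hz.2.1.le⟩)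
    have hden : volume (closedBall x r) ≤ 2 * volume (lowerHalfBall x ν r) :=
      volume_closedBall_le_two_mul hν hr
    have heq : 2⁻¹ * (volume (E' ∩ lowerHalfBall x ν r) / volume (lowerHalfBall x ν r))
        = volume (E' ∩ lowerHalfBall x ν r) / (2 * volume (lowerHalfBall x ν r)) := by
      rw [div_eq_mul_inv, div_eq_mul_inv,
        ENNReal.mul_inv (Or.inl two_ne_zero) (Or.inl ENNReal.ofNat_ne_top)]
      ring
    rw [heq]
    exact ENNReal.div_le_div hnum hden
  have htend2 : Tendsto (fun k : ℕ => 2⁻¹ * (volume (E' ∩ lowerHalfBall x ν (1/(k+1)))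
      / volume (lowerHalfBall x ν (1/(k+1))))) atTop (𝓝 (2⁻¹ * 1)) :=
    ENNReal.Tendsto.const_mul h3' (Or.inr (by norm_num))
  have hliminf : (2⁻¹ : ℝ≥0∞) * 1 ≤ liminf (fun k : ℕ =>
      volume (E ∩ closedBall x (1/(k+1))) / volume (closedBall x (1/(k+1)))) atTop := by
    rw [← htend2.liminf_eq]
    exact liminf_le_liminf (Eventually.of_forall key)
  simpa only [densD, mem_setOf_eq, mul_one, one_div] using hliminf


lemma lintegral_restrict_add_restrict_compl_le {α : Type*} [MeasurableSpace α]
    (ν : Measure α) (F : α → ℝ≥0∞) {S : Set α} (hS : MeasurableSet S) :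
    (∫⁻ z in S, F z ∂ν) + (∫⁻ z in Sᶜ, F z ∂ν) ≤ ∫⁻ z, F z ∂ν := by
  classical
  obtain ⟨φ, hφm, hφle, hφeq⟩ := exists_measurable_le_lintegral_eq (ν.restrict S) F
  obtain ⟨ψ, hψm, hψle, hψeq⟩ := exists_measurable_le_lintegral_eq (ν.restrict Sᶜ) F
  set χ : α → ℝ≥0∞ := S.piecewise φ ψ with hχ
  have hχm : Measurable χ := Measurable.piecewise hS hφm hψm
  have hχle : χ ≤ F := by
    intro z
    by_cases hz : z ∈ S
    · simpa [hχ, Set.piecewise, hz] using hφle z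
    · simpa [hχ, Set.piecewise, hz] using hψle z
  have h1 : ∫⁻ z in S, χ z ∂ν = ∫⁻ z in S, φ z ∂ν :=
    setLIntegral_congr_fun hS (fun z hz => by
      simp [hχ, Set.piecewise, hz])
  have h2 : ∫⁻ z in Sᶜ, χ z ∂ν = ∫⁻ z in Sᶜ, ψ z ∂ν :=
    setLIntegral_congr_fun hS.compl (fun z hz => by
      simp [hχ, Set.piecewise, (by simpa using hz : z ∉ S)])
  calc (∫⁻ z in S, F z ∂ν) + (∫⁻ z in Sᶜ, F z ∂ν)
      = (∫⁻ z in S, χ z ∂ν) + (∫⁻ z in Sᶜ, χ z ∂ν) := by rw [hφeq, hψeq, h1, h2]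
    _ = ∫⁻ z, χ z ∂ν := lintegral_add_compl χ hS
    _ ≤ ∫⁻ z, F z ∂ν := lintegral_mono hχle

lemma exists_tail (ν : Measure (EucN N)) (F : EucN N → ℝ≥0∞)
    (hF : ∫⁻ z, F z ∂ν ≠ ⊤) {η : ℝ≥0∞} (hη : η ≠ 0) :
    ∃ n : ℕ, ∫⁻ z in {z : EucN N | (n:ℝ) ≤ ‖z‖}, F z ∂ν ≤ η := by
  set T : ℝ≥0∞ := ∫⁻ z, F z ∂ν with hT
  by_cases hηT : T ≤ η
  · exact ⟨0, le_trans (lintegral_mono' Measure.restrict_le_self le_rfl) hηT⟩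
  push_neg at hηT
  obtain ⟨φ, hφm, hφle, hφeq⟩ := exists_measurable_le_lintegral_eq ν F
  have hmeasS : ∀ n : ℕ, MeasurableSet {z : EucN N | ‖z‖ < (n:ℝ)} :=
    fun n => measurableSet_lt measurable_norm measurable_const
  have hsup : ⨆ n : ℕ, ∫⁻ z in {z : EucN N | ‖z‖ < (n:ℝ)}, φ z ∂ν = T := by
    have h1 : ∀ n : ℕ, ∫⁻ z in {z : EucN N | ‖z‖ < (n:ℝ)}, φ z ∂ν
        = ∫⁻ z, ({z : EucN N | ‖z‖ < (n:ℝ)}.indicator φ) z ∂ν :=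
      fun n => (lintegral_indicator (hmeasS n) φ).symm
    rw [hT, hφeq]
    calc ⨆ n : ℕ, ∫⁻ z in {z : EucN N | ‖z‖ < (n:ℝ)}, φ z ∂ν
        = ⨆ n : ℕ, ∫⁻ z, ({z : EucN N | ‖z‖ < (n:ℝ)}.indicator φ) z ∂ν := by
          exact iSup_congr h1
      _ = ∫⁻ z, ⨆ n : ℕ, ({z : EucN N | ‖z‖ < (n:ℝ)}.indicator φ) z ∂ν := by
          rw [lintegral_iSup (fun n => hφm.indicator (hmeasS n))]
          intro m n hmn z
          refine indicator_le_indicator_of_subset (fun w hw => ?_) (fun _ => zero_le) z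
          simp only [mem_setOf_eq] at hw ⊢
          exact lt_of_lt_of_le hw (Nat.cast_le.2 hmn)
      _ = ∫⁻ z, φ z ∂ν := by
          refine lintegral_congr fun z => ?_
          obtain ⟨n, hn⟩ := exists_nat_gt ‖z‖
          refine le_antisymm (iSup_le fun m => indicator_le_self' (fun _ _ => zero_le) z) ?_
          refine le_trans (le_of_eq ?_) (le_iSup _ n)
          rw [indicator_of_mem (by exact hn : z ∈ {z : EucN N | ‖z‖ < (n:ℝ)})]
  have hlt : T - η < ⨆ n : ℕ, ∫⁻ z in {z : EucN N | ‖z‖ < (n:ℝ)}, φ z ∂ν := by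
    rw [hsup]
    exact ENNReal.sub_lt_self hF (ne_of_gt (lt_of_le_of_lt (zero_le) hηT)) hη
  obtain ⟨n, hn⟩ := lt_iSup_iff.1 hlt
  refine ⟨n, ?_⟩
  have hcompl : {z : EucN N | (n:ℝ) ≤ ‖z‖} = {z : EucN N | ‖z‖ < (n:ℝ)}ᶜ := by
    ext z; simp [not_lt]
  have hadd := lintegral_restrict_add_restrict_compl_le ν F (hmeasS n)
  have hφres : ∫⁻ z in {z : EucN N | ‖z‖ < (n:ℝ)}, φ z ∂ν
      ≤ ∫⁻ z in {z : EucN N | ‖z‖ < (n:ℝ)}, F z ∂ν := lintegral_mono hφle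
  have hkey : (∫⁻ z in {z : EucN N | ‖z‖ < (n:ℝ)}ᶜ, F z ∂ν) + (T - η) ≤ T := by
    calc (∫⁻ z in {z : EucN N | ‖z‖ < (n:ℝ)}ᶜ, F z ∂ν) + (T - η)
        ≤ (∫⁻ z in {z : EucN N | ‖z‖ < (n:ℝ)}ᶜ, F z ∂ν)
          + (∫⁻ z in {z : EucN N | ‖z‖ < (n:ℝ)}, F z ∂ν) :=
          add_le_add_right (le_trans hn.le hφres) _
      _ = _ + _ := add_comm _ _
      _ ≤ T := hadd
  rw [hcompl]
  have h5 : T - η ≤ T := tsub_le_self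
  by_contra hcon
  push_neg at hcon
  have h6 : T < (∫⁻ z in {z : EucN N | ‖z‖ < (n:ℝ)}ᶜ, F z ∂ν) + (T - η) := by
    calc T = η + (T - η) := by
          rw [add_comm, tsub_add_cancel_of_le hηT.le]
      _ < _ + (T - η) := by
          exact ENNReal.add_lt_add_right (by
            exact ne_of_lt (lt_of_le_of_lt h5 (lt_top_iff_ne_top.2 hF))) hcon
  exact absurd hkey (not_le.2 h6)


set_option maxHeartbeats 1000000 in
lemma eilenberg (hN : 0 < N) (A : Set (EucN N)) (hA : volume A ≠ ⊤) {ek : ℝ≥0∞}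
    (he0 : ek ≠ 0) (heT : ek ≠ ⊤) :
    ∃ φ : ℝ → ℝ≥0∞, Measurable φ ∧
      (∀ R : ℝ, HN1 N (A ∩ sphere (0:EucN N) R) ≤ φ R) ∧
      (∫⁻ R, φ R ∂(volume : Measure ℝ)) ≤
        ENNReal.ofReal ((8:ℝ)^N) * (volume A + ek) / volume (ball (0:EucN N) 1) := by
  haveI : Nontrivial (EucN N) :=
    Module.nontrivial_of_finrank_pos (R := ℝ) (by rw [finrank_euclideanSpace_fin]; exact hN)
  set d : ℝ := (N:ℝ) - 1 with hd
  have hd0 : 0 ≤ d := by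
    rw [hd, sub_nonneg]
    exact_mod_cast hN
  set c : ℝ≥0∞ := volume (ball (0:EucN N) 1) with hcdef
  have hc0 : c ≠ 0 := (measure_ball_pos _ _ one_pos).ne'
  have hcT : c ≠ ⊤ := measure_ball_lt_top.ne
  obtain ⟨U, hAU, hUopen, hUvol⟩ := Set.exists_isOpen_lt_add A hA he0
  have hUT : volume U ≠ ⊤ :=
    (hUvol.trans (lt_top_iff_ne_top.2 (ENNReal.add_ne_top.2 ⟨hA, heT⟩))).ne
  have hUcne : (Uᶜ : Set (EucN N)).Nonempty := by
    rcases eq_empty_or_nonempty (Uᶜ : Set (EucN N)) with h | h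
    · exfalso
      have hUuniv : U = univ := by
        rw [← compl_compl U, h, compl_empty]
      have htop : volume (univ : Set (EucN N)) = ⊤ :=
        measure_univ_of_isAddLeftInvariant _
      rw [hUuniv, htop] at hUT
      exact hUT rfl
    · exact h
  -- Vitali families for each scale
  have cover : ∀ j : ℕ, ∃ (u : Set (EucN N)) (ρ : EucN N → ℝ),
      u.Countable ∧
      (∀ b ∈ u, 0 < ρ b) ∧ (∀ b ∈ u, ρ b ≤ 1/(j+1)) ∧
      u.PairwiseDisjoint (fun b => closedBall b (ρ b)) ∧
      (∀ b ∈ u, closedBall b (ρ b) ⊆ U) ∧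
      (∀ a ∈ U, ∃ b ∈ u, a ∈ closedBall b (4 * ρ b)) := by
    intro j
    set δ : ℝ := 1/(j+1) with hδdef
    have hδ : 0 < δ := by positivity
    set ρ : EucN N → ℝ := fun y => min δ (infDist y Uᶜ / 2) with hρdef
    have hUc : IsClosed (Uᶜ : Set (EucN N)) := hUopen.isClosed_compl
    have hρpos : ∀ y ∈ U, 0 < ρ y := by
      intro y hy
      have h1 : 0 < infDist y Uᶜ := (hUc.notMem_iff_infDist_pos hUcne).1 (fun h => h hy)
      exact lt_min hδ (by linarith)
    have hρball : ∀ y ∈ U, closedBall y (ρ y) ⊆ U := by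
      intro y hy z hz
      by_contra hzU
      have h1 : infDist y Uᶜ ≤ dist y z := infDist_le_dist_of_mem hzU
      have h2 : dist z y ≤ ρ y := mem_closedBall.1 hz
      have h3 : ρ y ≤ infDist y Uᶜ / 2 := min_le_right _ _
      have h4 : 0 < infDist y Uᶜ := (hUc.notMem_iff_infDist_pos hUcne).1 (fun h => h hy)
      rw [dist_comm] at h2
      linarith
    obtain ⟨u, huU, hdisj, hcov⟩ :=
      Vitali.exists_disjoint_subfamily_covering_enlargement_closedBall U id ρ δ
        (fun a _ => min_le_left _ _) 4 (by norm_num)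
    have hcnt : u.Countable := by
      refine hdisj.countable_of_nonempty_interior (fun b hb => ?_)
      exact ⟨b, ball_subset_interior_closedBall (mem_ball_self (hρpos b (huU hb)))⟩
    refine ⟨u, ρ, hcnt, fun b hb => hρpos b (huU hb), fun b hb => min_le_left _ _,
      hdisj, fun b hb => hρball b (huU hb), ?_⟩
    intro a ha
    obtain ⟨b, hb, hsub⟩ := hcov a ha
    exact ⟨b, hb, hsub (mem_closedBall_self (hρpos a ha).le)⟩
  choose u ρ hcnt hρ0 hρδ hdisj hsubU hcov using cover
  have hcntto : ∀ j, Countable (u j) := fun j => (hcnt j).to_subtype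
  set h : ℕ → ℝ → ℝ≥0∞ := fun j R =>
    ∑' b : (u j), (Icc (‖(b:EucN N)‖ - 4 * ρ j b) (‖(b:EucN N)‖ + 4 * ρ j b)).indicator
      (fun _ => (ENNReal.ofReal (8 * ρ j b)) ^ d) R with hhdef
  have hmeas : ∀ j, Measurable (h j) := by
    intro j
    haveI := hcntto j
    exact Measurable.ennreal_tsum fun b => measurable_const.indicator measurableSet_Icc
  have hdiam : ∀ (j : ℕ) (b : (u j)),
      EMetric.diam (closedBall (b:EucN N) (4 * ρ j b)) ≤ ENNReal.ofReal (8 * ρ j b) := by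
    intro j b
    refine ediam_le_of_forall_dist_le (fun w hw v hv => ?_)
    calc dist w v ≤ dist w (b:EucN N) + dist (b:EucN N) v := dist_triangle _ _ _
      _ ≤ 4 * ρ j b + 4 * ρ j b := by
          refine add_le_add (mem_closedBall.1 hw) ?_
          rw [dist_comm]
          exact mem_closedBall.1 hv
      _ = 8 * ρ j b := by ring
  refine ⟨fun R => liminf (fun j => h j R) atTop, Measurable.liminf hmeas, fun R => ?_, ?_⟩
  · -- Hausdorff measure bound
    have hH := MeasureTheory.Measure.hausdorffMeasure_le_liminf_tsum (d := d) (A ∩ sphere (0:EucN N) R)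
      (l := atTop) (r := fun j : ℕ => ENNReal.ofReal (8 * (1/(j+1))))
      ?_ (t := fun (j : ℕ)
        (i : {b : (u j) // (closedBall (b:EucN N) (4 * ρ j b) ∩ sphere (0:EucN N) R).Nonempty})
        => closedBall (i.1 : EucN N) (4 * ρ j i.1)) ?_ ?_
    · refine le_trans hH (liminf_le_liminf (Eventually.of_forall fun j => ?_))
      haveI := hcntto j
      have step : ∀ i : {b : (u j) //
          (closedBall (b:EucN N) (4 * ρ j b) ∩ sphere (0:EucN N) R).Nonempty},
          EMetric.diam (closedBall (i.1 : EucN N) (4 * ρ j i.1)) ^ d ≤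
          (Icc (‖(i.1:EucN N)‖ - 4 * ρ j i.1) (‖(i.1:EucN N)‖ + 4 * ρ j i.1)).indicator
            (fun _ => (ENNReal.ofReal (8 * ρ j i.1)) ^ d) R := by
        intro i
        have hR : R ∈ Icc (‖(i.1:EucN N)‖ - 4 * ρ j i.1) (‖(i.1:EucN N)‖ + 4 * ρ j i.1) := by
          obtain ⟨z, hz1, hz2⟩ := i.2
          have h1 : dist z (i.1:EucN N) ≤ 4 * ρ j i.1 := mem_closedBall.1 hz1
          have h2 : ‖z‖ = R := by rwa [mem_sphere_iff_norm, sub_zero] at hz2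
          have h3 : |‖(i.1:EucN N)‖ - ‖z‖| ≤ ‖(i.1:EucN N) - z‖ := abs_norm_sub_norm_le _ _
          have h4 : ‖(i.1:EucN N) - z‖ = dist z (i.1:EucN N) := by
            rw [dist_eq_norm, norm_sub_rev]
          rw [h2, h4] at h3
          rw [abs_le] at h3
          constructor <;> [linarith [h3.2]; linarith [h3.1]]
        rw [indicator_of_mem hR]
        exact ENNReal.rpow_le_rpow (hdiam j i.1) hd0
      refine le_trans (ENNReal.tsum_le_tsum step) ?_
      exact ENNReal.tsum_comp_le_tsum_of_injective Subtype.val_injective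
        (fun b : (u j) => (Icc (‖(b:EucN N)‖ - 4 * ρ j b) (‖(b:EucN N)‖ + 4 * ρ j b)).indicator
          (fun _ => (ENNReal.ofReal (8 * ρ j b)) ^ d) R)
    · -- r tendsto 0
      have h1 : Tendsto (fun j : ℕ => 8 * (1/(j+1) : ℝ)) atTop (𝓝 (8 * 0)) :=
        tendsto_one_div_add_atTop_nhds_zero_nat.const_mul 8
      rw [mul_zero] at h1
      have h2 := (ENNReal.continuous_ofReal.tendsto 0).comp h1
      simpa [Function.comp_def, ENNReal.ofReal_mul] using h2
    · -- diam bounds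
      refine Eventually.of_forall fun j => fun i => ?_
      refine le_trans (hdiam j i.1) (ENNReal.ofReal_le_ofReal ?_)
      have := hρδ j i.1 i.1.2
      linarith
    · -- covering
      refine Eventually.of_forall fun j => fun z hz => ?_
      obtain ⟨b, hb, hzb⟩ := hcov j z (hAU hz.1)
      exact mem_iUnion.2 ⟨⟨⟨b, hb⟩, ⟨z, hzb, hz.2⟩⟩, hzb⟩
  · -- integral bound
    refine le_trans (lintegral_liminf_le hmeas) ?_
    have hint : ∀ j, ∫⁻ R, h j R ∂(volume : Measure ℝ)
        ≤ ENNReal.ofReal ((8:ℝ)^N) * (volume A + ek) / c := by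
      intro j
      haveI := hcntto j
      rw [hhdef]
      rw [lintegral_tsum (fun b => (measurable_const.indicator measurableSet_Icc).aemeasurable)]
      have hterm : ∀ b : (u j),
          ∫⁻ R, (Icc (‖(b:EucN N)‖ - 4 * ρ j b) (‖(b:EucN N)‖ + 4 * ρ j b)).indicator
            (fun _ => (ENNReal.ofReal (8 * ρ j b)) ^ d) R ∂(volume : Measure ℝ)
          = ENNReal.ofReal ((8:ℝ)^N) * ENNReal.ofReal ((ρ j b)^N) := by
        intro b
        rw [lintegral_indicator_const measurableSet_Icc, Real.volume_Icc]
        have hρb : 0 < ρ j b := hρ0 j b b.2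
        have h8 : (0:ℝ) < 8 * ρ j b := by positivity
        have harith : ‖(b:EucN N)‖ + 4 * ρ j b - (‖(b:EucN N)‖ - 4 * ρ j b) = 8 * ρ j b := by
          ring
        rw [harith]
        set X : ℝ≥0∞ := ENNReal.ofReal (8 * ρ j b) with hX
        have hX0 : X ≠ 0 := (ENNReal.ofReal_pos.2 h8).ne'
        have hXT : X ≠ ⊤ := ENNReal.ofReal_ne_top
        calc X ^ d * X = X ^ d * X ^ (1:ℝ) := by rw [ENNReal.rpow_one]
          _ = X ^ (d + 1) := (ENNReal.rpow_add _ _ hX0 hXT).symm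
          _ = X ^ ((N:ℝ)) := by rw [hd]; ring_nf
          _ = ENNReal.ofReal ((8 * ρ j b) ^ ((N:ℝ))) := ENNReal.ofReal_rpow_of_pos h8
          _ = ENNReal.ofReal ((8 * ρ j b) ^ N) := by rw [Real.rpow_natCast]
          _ = ENNReal.ofReal ((8:ℝ)^N * (ρ j b)^N) := by rw [mul_pow]
          _ = ENNReal.ofReal ((8:ℝ)^N) * ENNReal.ofReal ((ρ j b)^N) :=
              ENNReal.ofReal_mul (by positivity)
      rw [tsum_congr hterm, ENNReal.tsum_mul_left]
      have hsum : ∑' b : (u j), ENNReal.ofReal ((ρ j b)^N) ≤ volume U / c := by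
        have heq : ∀ b : (u j), ENNReal.ofReal ((ρ j b)^N)
            = volume (closedBall (b:EucN N) (ρ j b)) / c := by
          intro b
          rw [Measure.addHaar_closedBall volume _ (hρ0 j b b.2).le, finrank_euclideanSpace_fin,
            mul_div_assoc, ENNReal.div_self hc0 hcT, mul_one]
        rw [tsum_congr heq]
        simp only [div_eq_mul_inv]
        rw [ENNReal.tsum_mul_right]
        refine mul_le_mul_left ?_ _
        rw [← measure_biUnion (hcnt j) (hdisj j) (fun b _ => measurableSet_closedBall)]
        exact measure_mono (iUnion₂_subset (hsubU j))
      calc ENNReal.ofReal ((8:ℝ)^N) * ∑' b : (u j), ENNReal.ofReal ((ρ j b)^N)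
          ≤ ENNReal.ofReal ((8:ℝ)^N) * (volume U / c) := mul_le_mul_right hsum _
        _ ≤ ENNReal.ofReal ((8:ℝ)^N) * ((volume A + ek) / c) :=
            mul_le_mul_right (ENNReal.div_le_div hUvol.le le_rfl) _
        _ = ENNReal.ofReal ((8:ℝ)^N) * (volume A + ek) / c := (mul_div_assoc _ _ _).symm
    refine le_trans (liminf_le_liminf (Eventually.of_forall hint)) ?_
    rw [liminf_const]


end TruncAux

/-- A set of finite perimeter: `H^{N-1}(∂*E) < ∞`. -/
def HasFinPer (E : Set (EucN N)) : Prop :=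
  MeasurableSet E ∧ HN1 N (redBoundary E) < ⊤

/-- A set of locally finite perimeter: its intersection with any ball has finite perimeter. -/
def HasLocFinPer (E : Set (EucN N)) : Prop :=
  MeasurableSet E ∧ ∀ (x : EucN N) (r : ℝ), HN1 N (redBoundary (E ∩ ball x r)) < ⊤

/-- The perimeter `P(E) = H^{N-1}(∂*E)`, as a real number. -/
def peri (E : Set (EucN N)) : ℝ := (HN1 N (redBoundary E)).toReal

open TruncAux in
set_option maxHeartbeats 2000000 in
/-- **Truncation to a ball with small `f`-volume and `g`-perimeter error.** -/
theorem truncation_to_ball {N : ℕ} (f : EucN N → ℝ) (g : EucN N → EucN N → ℝ)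
    (hf_pos : ∀ x, 0 < f x) (hf_loc : LocallyIntegrable f volume)
    (hg_meas : Measurable fun p : EucN N × EucN N => g p.1 p.2)
    (hg_pos : ∀ x ν, ‖ν‖ = 1 → 0 < g x ν)
    (M : ℝ) (hM : 0 < M) (hgf : ∀ x ν, ‖ν‖ = 1 → g x ν ≤ M * f x)
    (E : Set (EucN N)) (hE : HasLocFinPer E)
    (hEg : (∫⁻ z in redBoundary E, ENNReal.ofReal (g z (outerNormal E z)) ∂(HN1 N)) ≠ ⊤)
    (hEf : (∫⁻ z in E, ENNReal.ofReal (f z) ∂volume) ≠ ⊤)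
    (ε : ℝ) (hε : 0 < ε) :
    ∃ R > (0:ℝ),
      (∫⁻ z in (E \ (E ∩ closedBall (0:EucN N) R)) ∪ ((E ∩ closedBall (0:EucN N) R) \ E),
        ENNReal.ofReal (f z) ∂volume) < ENNReal.ofReal ε ∧
      (∫⁻ z in redBoundary E \ redBoundary (E ∩ closedBall (0:EucN N) R),
          ENNReal.ofReal (g z (outerNormal E z)) ∂(HN1 N)) +
        (∫⁻ z in redBoundary (E ∩ closedBall (0:EucN N) R) \ redBoundary E,
          ENNReal.ofReal (g z (outerNormal (E ∩ closedBall (0:EucN N) R) z)) ∂(HN1 N)) <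
        ENNReal.ofReal ε := by
  classical
  rcases Nat.eq_zero_or_pos N with hN0 | hN
  · -- trivial case N = 0
    subst hN0
    haveI hss : Subsingleton (EucN 0) :=
      ⟨fun a b => PiLp.ext fun i => i.elim0⟩
    refine ⟨1, one_pos, ?_, ?_⟩
    · have hcb : ∀ z : EucN 0, z ∈ closedBall (0:EucN 0) 1 := by
        intro z
        rw [mem_closedBall, show z = 0 from Subsingleton.elim z 0]
        simp
      have hempty : (E \ (E ∩ closedBall (0:EucN 0) 1))
          ∪ ((E ∩ closedBall (0:EucN 0) 1) \ E) = (∅ : Set (EucN 0)) := by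
        ext z
        simp [hcb z]
      rw [hempty, Measure.restrict_empty, lintegral_zero_measure]
      exact ENNReal.ofReal_pos.2 hε
    · have hred : ∀ X : Set (EucN 0), redBoundary X = ∅ := by
        intro X
        ext x
        simp only [redBoundary, mem_setOf_eq, mem_empty_iff_false, iff_false, not_exists]
        intro ν hν
        have h1 := hν.1
        rw [show ν = 0 from Subsingleton.elim ν 0, norm_zero] at h1
        exact zero_ne_one h1
      rw [hred, hred]
      simp only [Set.empty_diff, Measure.restrict_empty, lintegral_zero_measure, add_zero]
      exact ENNReal.ofReal_pos.2 hε
  -- main case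
  haveI ntv : Nontrivial (EucN N) :=
    Module.nontrivial_of_finrank_pos (R := ℝ) (by rw [finrank_euclideanSpace_fin]; exact hN)
  obtain ⟨hEmeas, -⟩ := hE
  have hfae : AEMeasurable f volume := hf_loc.aestronglyMeasurable.aemeasurable
  set f₀ : EucN N → ℝ := hfae.mk f with hf₀def
  have hf₀m : Measurable f₀ := hfae.measurable_mk
  have hff₀ : f =ᵐ[volume] f₀ := hfae.ae_eq_mk
  set D : Set (EucN N) := densD E with hD
  have hDm : MeasurableSet D := measurableSet_densD hEmeas
  have hDnull : volume (D \ E) = 0 := volume_densD_diff hEmeas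
  set I : ℝ≥0∞ := ∫⁻ z in D, ENNReal.ofReal (f₀ z) ∂volume with hIdef
  have hIle : I ≤ ∫⁻ z in E, ENNReal.ofReal (f z) ∂volume := by
    have h2 : ∫⁻ z in E, ENNReal.ofReal (f₀ z) ∂volume
        = ∫⁻ z in E, ENNReal.ofReal (f z) ∂volume := by
      refine lintegral_congr_ae (ae_restrict_of_ae ?_)
      filter_upwards [hff₀] with z hz
      rw [hz]
    calc I ≤ ∫⁻ z in E ∪ (D \ E), ENNReal.ofReal (f₀ z) ∂volume :=
          lintegral_mono_set (fun z hz => by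
            by_cases h : z ∈ E
            · exact Or.inl h
            · exact Or.inr ⟨hz, h⟩)
      _ ≤ (∫⁻ z in E, ENNReal.ofReal (f₀ z) ∂volume)
          + ∫⁻ z in D \ E, ENNReal.ofReal (f₀ z) ∂volume := lintegral_union_le _ _ _
      _ = ∫⁻ z in E, ENNReal.ofReal (f₀ z) ∂volume := by
          rw [setLIntegral_measure_zero _ _ hDnull, add_zero]
      _ = ∫⁻ z in E, ENNReal.ofReal (f z) ∂volume := h2
  have hI : I ≠ ⊤ := (lt_of_le_of_lt hIle (lt_top_iff_ne_top.2 hEf)).ne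
  -- dyadic levels
  set c2 : ℤ → ℝ≥0∞ := fun k => ENNReal.ofReal ((2:ℝ)^(k+1)) with hc2def
  have hc2_0 : ∀ k, c2 k ≠ 0 := fun k => (ENNReal.ofReal_pos.2 (zpow_pos two_pos _)).ne'
  have hc2_T : ∀ k, c2 k ≠ ⊤ := fun _ => ENNReal.ofReal_ne_top
  set W : ℤ → Set (EucN N) := fun k => D ∩ {z : EucN N | (2:ℝ)^k < f₀ z} with hWdef
  have hWm : ∀ k, MeasurableSet (W k) :=
    fun k => hDm.inter (measurableSet_lt measurable_const hf₀m)
  set B : ℤ → Set (EucN N) := fun k => D ∩ {z : EucN N | (2:ℝ)^k < f z} with hBdef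
  have hBW : ∀ k, volume (B k) ≤ volume (W k) := by
    intro k
    have hnull : volume {z : EucN N | ¬ f z = f₀ z} = 0 := by
      exact hff₀
    have hsub : B k ⊆ W k ∪ {z : EucN N | ¬ f z = f₀ z} := by
      intro z hz
      by_cases h : f z = f₀ z
      · exact Or.inl ⟨hz.1, by rw [mem_setOf_eq, ← h]; exact hz.2⟩
      · exact Or.inr h
    calc volume (B k) ≤ volume (W k ∪ {z : EucN N | ¬ f z = f₀ z}) := measure_mono hsub
      _ ≤ volume (W k) + volume {z : EucN N | ¬ f z = f₀ z} := measure_union_le _ _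
      _ = volume (W k) := by rw [hnull, add_zero]
  -- interval arithmetic for dyadic levels
  have hc2vol : ∀ k : ℤ, c2 k = 4 * volume (Ioc ((2:ℝ)^(k-1)) ((2:ℝ)^k)) := by
    intro k
    rw [Real.volume_Ioc]
    have h1 : (2:ℝ)^k = (2:ℝ)^(k-1) * 2 := by
      rw [← zpow_add_one₀ (two_ne_zero : (2:ℝ) ≠ 0) (k-1), sub_add_cancel]
    have h2 : (2:ℝ)^(k+1) = (2:ℝ)^(k-1) * 4 := by
      have h3 : (2:ℝ)^(k+1) = (2:ℝ)^((k-1)+2) := by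
        congr 1
        omega
      rw [h3, zpow_add₀ (two_ne_zero : (2:ℝ) ≠ 0)]
      norm_num
    have harith : (2:ℝ)^(k+1) = 4 * ((2:ℝ)^k - (2:ℝ)^(k-1)) := by linarith
    rw [hc2def]
    simp only []
    rw [harith, ENNReal.ofReal_mul (by norm_num : (0:ℝ) ≤ 4)]
    congr 1
    norm_num
  have hpair : Pairwise (Function.onFun Disjoint fun k : ℤ => Ioc ((2:ℝ)^(k-1)) ((2:ℝ)^k)) := by
    have key : ∀ a b : ℤ, a < b →
        Disjoint (Ioc ((2:ℝ)^(a-1)) ((2:ℝ)^a)) (Ioc ((2:ℝ)^(b-1)) ((2:ℝ)^b)) := by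
      intro a b hab
      rw [Set.Ioc_disjoint_Ioc]
      calc min ((2:ℝ)^a) ((2:ℝ)^b) ≤ (2:ℝ)^a := min_le_left _ _
        _ ≤ (2:ℝ)^(b-1) := zpow_le_zpow_right₀ one_le_two (by omega)
        _ ≤ max ((2:ℝ)^(a-1)) ((2:ℝ)^(b-1)) := le_max_right _ _
    intro a b hab
    rcases hab.lt_or_gt with h | h
    · exact key _ _ h
    · exact (key _ _ h).symm
  -- ladder bound
  have hladder : ∀ z : EucN N, (∑' k : ℤ, (W k).indicator (fun _ => c2 k) z)
      ≤ (4:ℝ≥0∞) * (D.indicator (fun w => ENNReal.ofReal (f₀ w)) z) := by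
    intro z
    by_cases hzD : z ∈ D
    · rw [indicator_of_mem hzD]
      set y : ℝ := f₀ z with hy
      have hterm : ∀ k : ℤ, (W k).indicator (fun _ => c2 k) z
          ≤ 4 * volume (Ioc ((2:ℝ)^(k-1)) ((2:ℝ)^k) ∩ Ioc 0 y) := by
        intro k
        by_cases hk : z ∈ W k
        · rw [indicator_of_mem hk]
          have hky : (2:ℝ)^k < y := hk.2
          have hsub : Ioc ((2:ℝ)^(k-1)) ((2:ℝ)^k) ⊆ Ioc (0:ℝ) y := by
            intro t ht
            exact ⟨lt_trans (zpow_pos two_pos _) ht.1, le_trans ht.2 hky.le⟩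
          rw [inter_eq_self_of_subset_left hsub, ← hc2vol k]
        · rw [indicator_of_notMem hk]
          exact zero_le
      calc (∑' k : ℤ, (W k).indicator (fun _ => c2 k) z)
          ≤ ∑' k : ℤ, 4 * volume (Ioc ((2:ℝ)^(k-1)) ((2:ℝ)^k) ∩ Ioc 0 y) :=
            ENNReal.tsum_le_tsum hterm
        _ = 4 * ∑' k : ℤ, volume (Ioc ((2:ℝ)^(k-1)) ((2:ℝ)^k) ∩ Ioc 0 y) :=
            ENNReal.tsum_mul_left
        _ = 4 * volume (⋃ k : ℤ, (Ioc ((2:ℝ)^(k-1)) ((2:ℝ)^k) ∩ Ioc 0 y)) := by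
            rw [measure_iUnion
              (hpair.mono fun a b hab => hab.mono inter_subset_left inter_subset_left)
              (fun k => measurableSet_Ioc.inter measurableSet_Ioc)]
        _ ≤ 4 * volume (Ioc (0:ℝ) y) :=
            mul_le_mul_right (measure_mono (iUnion_subset fun k => inter_subset_right)) _
        _ = 4 * ENNReal.ofReal y := by rw [Real.volume_Ioc, sub_zero]
    · have hzero : ∀ k : ℤ, (W k).indicator (fun _ => c2 k) z = 0 :=
        fun k => indicator_of_notMem (fun h => hzD h.1) _
      simp [hzero]
  have hsumW : ∑' k : ℤ, c2 k * volume (W k) ≤ 4 * I := by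
    have h1 : ∀ k : ℤ, c2 k * volume (W k)
        = ∫⁻ z, (W k).indicator (fun _ => c2 k) z ∂volume :=
      fun k => (lintegral_indicator_const (hWm k) _).symm
    rw [tsum_congr h1,
      ← lintegral_tsum (fun k => (measurable_const.indicator (hWm k)).aemeasurable)]
    calc ∫⁻ z, ∑' k : ℤ, (W k).indicator (fun _ => c2 k) z ∂volume
        ≤ ∫⁻ z, (4:ℝ≥0∞) * (D.indicator (fun w => ENNReal.ofReal (f₀ w)) z) ∂volume :=
          lintegral_mono hladder
      _ = 4 * ∫⁻ z, D.indicator (fun w => ENNReal.ofReal (f₀ w)) z ∂volume :=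
          lintegral_const_mul 4 ((hf₀m.ennreal_ofReal).indicator hDm)
      _ = 4 * I := by rw [lintegral_indicator hDm]
  -- finiteness of level volumes
  have hBkT : ∀ k : ℤ, volume (B k) ≠ ⊤ := by
    intro k
    refine (lt_of_le_of_lt (hBW k) ?_).ne
    have hmark : ENNReal.ofReal ((2:ℝ)^k) * volume (W k) ≤ I := by
      calc ENNReal.ofReal ((2:ℝ)^k) * volume (W k)
          = ∫⁻ _ in W k, ENNReal.ofReal ((2:ℝ)^k) ∂volume := by
            rw [setLIntegral_const]
        _ ≤ ∫⁻ z in W k, ENNReal.ofReal (f₀ z) ∂volume :=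
            setLIntegral_mono (hf₀m.ennreal_ofReal)
              (fun z hz => ENNReal.ofReal_le_ofReal hz.2.le)
        _ ≤ I := lintegral_mono_set inter_subset_left
    by_contra htop
    push_neg at htop
    rw [top_le_iff.1 htop, ENNReal.mul_top
      (ENNReal.ofReal_pos.2 (zpow_pos two_pos _)).ne'] at hmark
    exact hI (top_le_iff.1 hmark)
  -- error weights
  set e : ℤ → ℝ≥0∞ := fun k => (c2 k)⁻¹ * (2:ℝ≥0∞)⁻¹ ^ (Encodable.encode k + 1) with hedef
  have he0 : ∀ k, e k ≠ 0 := by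
    intro k
    simp only [hedef, ne_eq, mul_eq_zero, not_or]
    constructor
    · exact ENNReal.inv_ne_zero.2 (hc2_T k)
    · exact (pow_ne_zero _ (ENNReal.inv_ne_zero.2 ENNReal.ofNat_ne_top))
  have heT : ∀ k, e k ≠ ⊤ := by
    intro k
    simp only [hedef]
    exact ENNReal.mul_ne_top (ENNReal.inv_ne_top.2 (hc2_0 k))
      (ENNReal.pow_ne_top (by simp))
  have hsum_e : ∑' k : ℤ, c2 k * e k ≤ 1 := by
    have h1 : ∀ k : ℤ, c2 k * e k = (2:ℝ≥0∞)⁻¹ ^ (Encodable.encode k + 1) := by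
      intro k
      rw [hedef]
      simp only []
      rw [← mul_assoc, ENNReal.mul_inv_cancel (hc2_0 k) (hc2_T k), one_mul]
    rw [tsum_congr h1]
    calc ∑' k : ℤ, (2:ℝ≥0∞)⁻¹ ^ (Encodable.encode k + 1)
        ≤ ∑' n : ℕ, (2:ℝ≥0∞)⁻¹ ^ (n + 1) :=
          ENNReal.tsum_comp_le_tsum_of_injective Encodable.encode_injective
            (fun n : ℕ => (2:ℝ≥0∞)⁻¹ ^ (n + 1))
      _ = (2:ℝ≥0∞)⁻¹ * ∑' n : ℕ, (2:ℝ≥0∞)⁻¹ ^ n := by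
          simp only [pow_succ']
          rw [ENNReal.tsum_mul_left]
      _ = (2:ℝ≥0∞)⁻¹ * 2 := by
          rw [ENNReal.tsum_geometric, ENNReal.one_sub_inv_two, inv_inv]
      _ = 1 := ENNReal.inv_mul_cancel two_ne_zero ENNReal.ofNat_ne_top
  -- Eilenberg functions
  choose φ hφm hφle hφint using fun k : ℤ => eilenberg hN (B k) (hBkT k) (he0 k) (heT k)
  set Φ : ℝ → ℝ≥0∞ := fun R => ∑' k : ℤ, c2 k * φ k R with hΦdef
  have hΦm : Measurable Φ := Measurable.ennreal_tsum fun k => (hφm k).const_mul _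
  set cN : ℝ≥0∞ := volume (ball (0:EucN N) 1) with hcN
  have hcN0 : cN ≠ 0 := (measure_ball_pos _ _ one_pos).ne'
  set K : ℝ≥0∞ := ENNReal.ofReal ((8:ℝ)^N) / cN with hK
  have hKT : K ≠ ⊤ := (ENNReal.div_lt_top ENNReal.ofReal_ne_top hcN0).ne
  have hΦint : ∫⁻ R, Φ R ∂(volume : Measure ℝ) ≤ K * (4 * I + 1) := by
    rw [hΦdef]
    simp only []
    rw [lintegral_tsum (fun k => ((hφm k).const_mul _).aemeasurable)]
    have h2 : ∀ k : ℤ, ∫⁻ R, c2 k * φ k R ∂(volume : Measure ℝ)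
        ≤ K * (c2 k * volume (B k) + c2 k * e k) := by
      intro k
      rw [lintegral_const_mul _ (hφm k)]
      calc c2 k * ∫⁻ R, φ k R ∂(volume : Measure ℝ)
          ≤ c2 k * (ENNReal.ofReal ((8:ℝ)^N) * (volume (B k) + e k) / cN) :=
            mul_le_mul_right (hφint k) _
        _ = K * (c2 k * volume (B k) + c2 k * e k) := by
            rw [hK, div_eq_mul_inv, div_eq_mul_inv, mul_add]
            ring
    calc ∑' k : ℤ, ∫⁻ R, c2 k * φ k R ∂(volume : Measure ℝ)
        ≤ ∑' k : ℤ, K * (c2 k * volume (B k) + c2 k * e k) := ENNReal.tsum_le_tsum h2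
      _ = K * ((∑' k : ℤ, c2 k * volume (B k)) + ∑' k : ℤ, c2 k * e k) := by
          rw [ENNReal.tsum_mul_left, ENNReal.tsum_add]
      _ ≤ K * (4 * I + 1) := by
          refine mul_le_mul_right (add_le_add ?_ hsum_e) _
          refine le_trans (ENNReal.tsum_le_tsum fun k => mul_le_mul_right (hBW k) _) hsumW
  have hΦfin : ∫⁻ R, Φ R ∂(volume : Measure ℝ) ≠ ⊤ := by
    refine (lt_of_le_of_lt hΦint ?_).ne
    refine ENNReal.mul_lt_top (lt_top_iff_ne_top.2 hKT) ?_
    refine ENNReal.add_lt_top.2 ⟨?_, ENNReal.one_lt_top⟩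
    exact ENNReal.mul_lt_top (by norm_num) (lt_top_iff_ne_top.2 hI)
  -- choose tails
  obtain ⟨n₁, hn₁⟩ := exists_tail (volume.restrict E) (fun z => ENNReal.ofReal (f z)) hEf
    (η := ENNReal.ofReal (ε/2)) (ENNReal.ofReal_pos.2 (by linarith)).ne'
  obtain ⟨n₂, hn₂⟩ := exists_tail ((HN1 N).restrict (redBoundary E))
    (fun z => ENNReal.ofReal (g z (outerNormal E z))) hEg
    (η := ENNReal.ofReal (ε/4)) (ENNReal.ofReal_pos.2 (by linarith)).ne'
  -- choose R
  set η' : ℝ≥0∞ := ENNReal.ofReal (ε/4) / ENNReal.ofReal M with hη'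
  have hη'0 : η' ≠ 0 :=
    (ENNReal.div_pos (ENNReal.ofReal_pos.2 (by linarith)).ne' ENNReal.ofReal_ne_top).ne'
  set R₀ : ℝ := max (max (n₁:ℝ) (n₂:ℝ)) 1 with hR₀
  have hRex : ∃ R : ℝ, R₀ < R ∧ Φ R < η' := by
    by_contra hcon
    push_neg at hcon
    have h1 : ∫⁻ R in Ioi R₀, η' ∂(volume : Measure ℝ)
        ≤ ∫⁻ R in Ioi R₀, Φ R ∂(volume : Measure ℝ) :=
      setLIntegral_mono hΦm (fun R hR => hcon R hR)
    rw [setLIntegral_const, Real.volume_Ioi, ENNReal.mul_top hη'0] at h1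
    exact hΦfin (top_le_iff.1 (le_trans h1 (setLIntegral_le_lintegral _ _)))
  obtain ⟨R, hR₀R, hΦR⟩ := hRex
  have hR1 : (1:ℝ) ≤ R₀ := le_max_right _ _
  have hRpos : (0:ℝ) < R := by linarith
  have hn₁R : (n₁:ℝ) ≤ R := le_trans (le_trans (le_max_left _ _) (le_max_left _ _)) hR₀R.le
  have hn₂R : (n₂:ℝ) ≤ R := le_trans (le_trans (le_max_right _ _) (le_max_left _ _)) hR₀R.le
  refine ⟨R, hRpos, ?_, ?_⟩
  · -- volume part
    have hmeasn : MeasurableSet {z : EucN N | (n₁:ℝ) ≤ ‖z‖} :=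
      measurableSet_le measurable_const measurable_norm
    have hres : volume.restrict ((E \ (E ∩ closedBall (0:EucN N) R))
          ∪ ((E ∩ closedBall (0:EucN N) R) \ E))
        ≤ (volume.restrict E).restrict {z : EucN N | (n₁:ℝ) ≤ ‖z‖} := by
      rw [Measure.restrict_restrict hmeasn]
      refine Measure.restrict_mono ?_ le_rfl
      rintro z (hz | hz)
      · have hzE : z ∈ E := hz.1
        have h2 : z ∉ closedBall (0:EucN N) R := fun hc => hz.2 ⟨hzE, hc⟩
        have h3 : R < ‖z‖ := by rwa [mem_closedBall, dist_zero_right, not_le] at h2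
        exact ⟨le_of_lt (lt_of_le_of_lt hn₁R h3), hzE⟩
      · exact absurd hz.1.1 hz.2
    calc (∫⁻ z in (E \ (E ∩ closedBall (0:EucN N) R)) ∪ ((E ∩ closedBall (0:EucN N) R) \ E),
          ENNReal.ofReal (f z) ∂volume)
        ≤ ∫⁻ z in {z : EucN N | (n₁:ℝ) ≤ ‖z‖}, ENNReal.ofReal (f z) ∂(volume.restrict E) :=
          lintegral_mono' hres le_rfl
      _ ≤ ENNReal.ofReal (ε/2) := hn₁
      _ < ENNReal.ofReal ε := ENNReal.ofReal_lt_ofReal_iff hε |>.2 (by linarith)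
  · -- perimeter part
    have hT2a : (∫⁻ z in redBoundary E \ redBoundary (E ∩ closedBall (0:EucN N) R),
        ENNReal.ofReal (g z (outerNormal E z)) ∂(HN1 N)) ≤ ENNReal.ofReal (ε/4) := by
      have hmeasn : MeasurableSet {z : EucN N | (n₂:ℝ) ≤ ‖z‖} :=
        measurableSet_le measurable_const measurable_norm
      have hres : (HN1 N).restrict (redBoundary E \ redBoundary (E ∩ closedBall (0:EucN N) R))
          ≤ ((HN1 N).restrict (redBoundary E)).restrict {z : EucN N | (n₂:ℝ) ≤ ‖z‖} := by
        rw [Measure.restrict_restrict hmeasn]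
        refine Measure.restrict_mono ?_ le_rfl
        rintro z ⟨hz1, hz2⟩
        refine ⟨?_, hz1⟩
        simp only [mem_setOf_eq]
        by_contra hlt
        push_neg at hlt
        have hzR : ‖z‖ < R := lt_of_lt_of_le hlt hn₂R
        obtain ⟨ν, hν⟩ := hz1
        exact hz2 ⟨ν, (isOuterNormal_inter_iff hzR).2 hν⟩
      exact le_trans (lintegral_mono' hres le_rfl) hn₂
    have hT2b : (∫⁻ z in redBoundary (E ∩ closedBall (0:EucN N) R) \ redBoundary E,
        ENNReal.ofReal (g z (outerNormal (E ∩ closedBall (0:EucN N) R) z)) ∂(HN1 N))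
        ≤ ENNReal.ofReal (ε/4) := by
      set E' : Set (EucN N) := E ∩ closedBall (0:EucN N) R with hE'
      set T : Set (EucN N) := redBoundary E' \ redBoundary E with hT
      have hTD : ∀ z ∈ T, z ∈ D ∧ ‖z‖ = R := by
        intro z hz
        have hz1 : z ∈ redBoundary E' := hz.1
        obtain ⟨ν, hν⟩ := hz1
        constructor
        · exact mem_densD_of_isOuterNormal inter_subset_left hν
        · rcases lt_trichotomy ‖z‖ R with h | h | h
          · exact absurd ⟨ν, (isOuterNormal_inter_iff h).1 hν⟩ hz.2
          · exact h
          · exact absurd ⟨ν, hν⟩ (not_mem_redBoundary_inter h)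
      set V : ℤ → Set (EucN N) :=
        fun k => toMeasurable (HN1 N) (B k ∩ sphere (0:EucN N) R) with hV
      have hVm : ∀ k, MeasurableSet (V k) := fun k => measurableSet_toMeasurable _ _
      have hVle : ∀ k, HN1 N (V k) ≤ φ k R := by
        intro k
        rw [hV]
        simp only []
        rw [measure_toMeasurable]
        exact hφle k R
      set G : EucN N → ℝ≥0∞ :=
        fun z => ENNReal.ofReal M * ∑' k : ℤ, (V k).indicator (fun _ => c2 k) z with hG
      have hGm : Measurable G :=
        (Measurable.ennreal_tsum fun k => measurable_const.indicator (hVm k)).const_mul _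
      have hpt : ∀ z ∈ T, ENNReal.ofReal (g z (outerNormal E' z)) ≤ G z := by
        intro z hz
        obtain ⟨hzD, hzS⟩ := hTD z hz
        have hzred : z ∈ redBoundary E' := hz.1
        have hνspec : IsOuterNormal E' z (outerNormal E' z) :=
          isOuterNormal_outerNormal hzred
        have hgM : g z (outerNormal E' z) ≤ M * f z := hgf _ _ hνspec.1
        obtain ⟨k₁, hk₁⟩ := exists_mem_Ioc_zpow (hf_pos z) one_lt_two
        have hzV : z ∈ V k₁ := subset_toMeasurable _ _
          ⟨⟨hzD, hk₁.1⟩, by rw [mem_sphere_iff_norm, sub_zero]; exact hzS⟩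
        calc ENNReal.ofReal (g z (outerNormal E' z)) ≤ ENNReal.ofReal (M * f z) :=
              ENNReal.ofReal_le_ofReal hgM
          _ = ENNReal.ofReal M * ENNReal.ofReal (f z) := ENNReal.ofReal_mul hM.le
          _ ≤ ENNReal.ofReal M * c2 k₁ :=
              mul_le_mul_right (ENNReal.ofReal_le_ofReal hk₁.2) _
          _ ≤ ENNReal.ofReal M * ∑' k : ℤ, (V k).indicator (fun _ => c2 k) z := by
              refine mul_le_mul_right ?_ _
              refine le_trans (le_of_eq (indicator_of_mem hzV (fun _ => c2 k₁)).symm) ?_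
              exact ENNReal.le_tsum k₁
          _ = G z := rfl
      calc (∫⁻ z in T, ENNReal.ofReal (g z (outerNormal E' z)) ∂(HN1 N))
          ≤ ∫⁻ z in T, G z ∂(HN1 N) := setLIntegral_mono hGm hpt
        _ ≤ ∫⁻ z, G z ∂(HN1 N) := setLIntegral_le_lintegral _ _
        _ = ENNReal.ofReal M * ∑' k : ℤ, c2 k * HN1 N (V k) := by
            rw [hG]
            simp only []
            rw [lintegral_const_mul _
              (Measurable.ennreal_tsum fun k => measurable_const.indicator (hVm k)),
              lintegral_tsum (fun k => (measurable_const.indicator (hVm k)).aemeasurable)]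
            congr 1
            exact tsum_congr fun k => lintegral_indicator_const (hVm k) _
        _ ≤ ENNReal.ofReal M * Φ R := by
            refine mul_le_mul_right ?_ _
            exact ENNReal.tsum_le_tsum fun k => mul_le_mul_right (hVle k) _
        _ ≤ ENNReal.ofReal M * η' := mul_le_mul_right hΦR.le _
        _ ≤ ENNReal.ofReal (ε/4) := by
            rw [hη']
            exact ENNReal.mul_div_le
    calc (∫⁻ z in redBoundary E \ redBoundary (E ∩ closedBall (0:EucN N) R),
          ENNReal.ofReal (g z (outerNormal E z)) ∂(HN1 N)) +
        (∫⁻ z in redBoundary (E ∩ closedBall (0:EucN N) R) \ redBoundary E,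
          ENNReal.ofReal (g z (outerNormal (E ∩ closedBall (0:EucN N) R) z)) ∂(HN1 N))
        ≤ ENNReal.ofReal (ε/4) + ENNReal.ofReal (ε/4) := add_le_add hT2a hT2b
      _ = ENNReal.ofReal (ε/4 + ε/4) := (ENNReal.ofReal_add (by linarith) (by linarith)).symm
      _ < ENNReal.ofReal ε := ENNReal.ofReal_lt_ofReal_iff hε |>.2 (by linarith)
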